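/- Let R̃ be the integral closure of R in K, and assume R̃ is finitely generated as an R-module. If a, b ∈ R are nonzero and g = b/a is a unit of R̃, then length_R(R/bR) = length_R(R/aR). -/

import Mathlib

set_option synthInstance.maxHeartbeats 1000000
set_option maxHeartbeats 2000000

/-!
`R` is a Noetherian local integral domain of Krull dimension `1` with fraction field
`K = FractionRing R`.  The length of an `R`-module is expressed by the predicate
`HasLength R M d`: there is a maximal chain (composition series)
`⊥ = c₀ ⋖ c₁ ⋖ ⋯ ⋖ c_d = ⊤` of submodules of `M`; by Jordan–Hölder this `d` is unique
when it exists, and its existence expresses that `M` has finite length `d`.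
-/

/-- The `R`-module `M` has (finite) length `d`. -/
def HasLength (R M : Type*) [Ring R] [AddCommGroup M] [Module R M] (d : ℕ) : Prop :=
  ∃ c : Fin (d + 1) → Submodule R M, c 0 = ⊥ ∧ c (Fin.last d) = ⊤ ∧
    ∀ i : Fin d, c i.castSucc ⋖ c i.succ



section Chains

variable {α β : Type*} [PartialOrder α] [PartialOrder β]

/-- A maximal chain from `x` to `y` of length `d`. -/
def FinChain (x y : α) (d : ℕ) : Prop :=
  ∃ c : Fin (d + 1) → α, c 0 = x ∧ c (Fin.last d) = y ∧ ∀ i : Fin d, c i.castSucc ⋖ c i.succ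

lemma finChain_orderIso (e : α ≃o β) {x y : α} {d : ℕ} (h : FinChain x y d) :
    FinChain (e x) (e y) d := by
  obtain ⟨c, h0, h1, h2⟩ := h
  exact ⟨fun i => e (c i), congrArg e h0, congrArg e h1,
    fun i => (apply_covBy_apply_iff e).2 (h2 i)⟩

lemma covBy_subtype_iff {P : α → Prop}
    (hP : ∀ ⦃a b c : α⦄, P a → P c → a ≤ b → b ≤ c → P b) {x y : Subtype P} :
    x ⋖ y ↔ (x : α) ⋖ (y : α) := by
  constructor
  · rintro ⟨hlt, hmid⟩
    refine ⟨Subtype.coe_lt_coe.2 hlt, fun z hz hz' => ?_⟩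
    have hPz : P z := hP x.2 y.2 hz.le hz'.le
    exact hmid (c := ⟨z, hPz⟩) (Subtype.coe_lt_coe.1 hz) (Subtype.coe_lt_coe.1 hz')
  · rintro ⟨hlt, hmid⟩
    exact ⟨Subtype.coe_lt_coe.1 hlt, fun z hz hz' =>
      hmid (Subtype.coe_lt_coe.2 hz) (Subtype.coe_lt_coe.2 hz')⟩

lemma finChain_subtype_iff {P : α → Prop}
    (hP : ∀ ⦃a b c : α⦄, P a → P c → a ≤ b → b ≤ c → P b) {x y : Subtype P} {d : ℕ} :
    FinChain x y d ↔ FinChain (x : α) (y : α) d := by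
  constructor
  · rintro ⟨c, h0, h1, h2⟩
    exact ⟨fun i => (c i : α), congrArg Subtype.val h0, congrArg Subtype.val h1,
      fun i => (covBy_subtype_iff hP).1 (h2 i)⟩
  · rintro ⟨c, h0, h1, h2⟩
    have hmono : StrictMono c := Fin.strictMono_iff_lt_succ.2 fun i => (h2 i).lt
    have hmem : ∀ i, P (c i) := by
      intro i
      refine hP x.2 y.2 ?_ ?_
      · rw [← h0]; exact hmono.monotone (Fin.zero_le i)
      · rw [← h1]; exact hmono.monotone (Fin.le_last i)
    refine ⟨fun i => ⟨c i, hmem i⟩, Subtype.ext h0, Subtype.ext h1, fun i => ?_⟩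
    exact (covBy_subtype_iff hP).2 (h2 i)

lemma FinChain.trans {x y z : α} {d e : ℕ} (h1 : FinChain x y d) (h2 : FinChain y z e) :
    FinChain x z (d + e) := by
  obtain ⟨c, hc0, hc1, hc2⟩ := h1
  obtain ⟨c', hc0', hc1', hc2'⟩ := h2
  let s : RelSeries {(a, b) : α × α | a ⋖ b} := ⟨d, c, hc2⟩
  let t : RelSeries {(a, b) : α × α | a ⋖ b} := ⟨e, c', hc2'⟩
  have hconn : s.last = t.head := by
    show c (Fin.last d) = c' 0
    rw [hc1, hc0']
  let w := s.smash t hconn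
  refine ⟨w.toFun, ?_, ?_, w.step⟩
  · show w.head = x
    rw [RelSeries.head_smash]; exact hc0
  · show w.last = z
    rw [RelSeries.last_smash]; exact hc1'

end Chains

section Modules

variable {R M N : Type*} [Ring R] [AddCommGroup M] [Module R M] [AddCommGroup N] [Module R N]

lemma hasLength_iff_finChain {d : ℕ} :
    HasLength R M d ↔ FinChain (⊥ : Submodule R M) ⊤ d := Iff.rfl

lemma FinChain.unique {x y : Submodule R M} {d e : ℕ}
    (hd : FinChain x y d) (he : FinChain x y e) : d = e := by
  obtain ⟨c, h0, h1, h2⟩ := hd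
  obtain ⟨c', h0', h1', h2'⟩ := he
  let s : CompositionSeries (Submodule R M) := ⟨d, c, h2⟩
  let t : CompositionSeries (Submodule R M) := ⟨e, c', h2'⟩
  have hh : s.head = t.head := by show c 0 = c' 0; rw [h0, h0']
  have hl : s.last = t.last := by show c (Fin.last d) = c' (Fin.last e); rw [h1, h1']
  exact (CompositionSeries.jordan_holder s t hh hl).length_eq

lemma FinChain.map_linearEquiv (f : M ≃ₗ[R] N) {x y : Submodule R M} {d : ℕ}
    (h : FinChain x y d) :
    FinChain (x.map (f : M →ₗ[R] N)) (y.map (f : M →ₗ[R] N)) d := by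
  have := finChain_orderIso (Submodule.orderIsoMapComap f) h
  simpa [Submodule.orderIsoMapComap] using this

lemma FinChain.map_subtype' {p : Submodule R M} {x y : Submodule R p} {d : ℕ}
    (h : FinChain x y d) : FinChain (x.map p.subtype) (y.map p.subtype) d := by
  have h1 := finChain_orderIso (Submodule.MapSubtype.orderIso p) h
  have hP : ∀ ⦃a b c : Submodule R M⦄, a ≤ p → c ≤ p → a ≤ b → b ≤ c → b ≤ p :=
    fun a b c _ hc _ hbc => hbc.trans hc
  exact (finChain_subtype_iff (P := fun q => q ≤ p) hP).1 h1

lemma FinChain.map_injective {f : M →ₗ[R] N} (hf : Function.Injective f)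
    {x y : Submodule R M} {d : ℕ} (h : FinChain x y d) :
    FinChain (x.map f) (y.map f) d := by
  have h1 := (FinChain.map_linearEquiv (LinearEquiv.ofInjective f hf) h).map_subtype'
  have key : ∀ q : Submodule R M,
      (q.map ((LinearEquiv.ofInjective f hf : M →ₗ[R] LinearMap.range f))).map
        (LinearMap.range f).subtype = q.map f := by
    intro q
    rw [← Submodule.map_comp]
    congr 1
  rwa [key, key] at h1

lemma hasLength_quotient_iff (p : Submodule R M) {d : ℕ} :
    HasLength R (M ⧸ p) d ↔ FinChain p (⊤ : Submodule R M) d := by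
  rw [hasLength_iff_finChain]
  have hP : ∀ ⦃a b c : Submodule R M⦄, p ≤ a → p ≤ c → a ≤ b → b ≤ c → p ≤ b :=
    fun a b c hpa _ hab _ => hpa.trans hab
  constructor
  · intro h
    have h1 := finChain_orderIso (Submodule.comapMkQRelIso p) h
    have h2 := (finChain_subtype_iff (P := fun q => p ≤ q) hP).1 h1
    have e1 : ((Submodule.comapMkQRelIso p) ⊥ : Submodule R M) = p := by
      show Submodule.comap p.mkQ ⊥ = p
      rw [Submodule.comap_bot, Submodule.ker_mkQ]
    have e2 : ((Submodule.comapMkQRelIso p) ⊤ : Submodule R M) = ⊤ := by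
      show Submodule.comap p.mkQ ⊤ = ⊤
      rw [Submodule.comap_top]
    rwa [e1, e2] at h2
  · intro h
    have h1 := (finChain_subtype_iff (P := fun q => p ≤ q) hP
      (x := ⟨p, le_refl p⟩) (y := ⟨⊤, le_top⟩)).2 h
    have h2 := finChain_orderIso (Submodule.comapMkQRelIso p).symm h1
    have e1 : (Submodule.comapMkQRelIso p).symm ⟨p, le_refl p⟩ = ⊥ := by
      rw [OrderIso.symm_apply_eq]
      apply Subtype.ext
      show p = Submodule.comap p.mkQ ⊥
      rw [Submodule.comap_bot, Submodule.ker_mkQ]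
    have e2 : (Submodule.comapMkQRelIso p).symm ⟨⊤, (le_top : p ≤ ⊤)⟩ = ⊤ := by
      rw [OrderIso.symm_apply_eq]
      apply Subtype.ext
      show (⊤ : Submodule R M) = Submodule.comap p.mkQ ⊤
      rw [Submodule.comap_top]
    rw [← e1, ← e2]; exact h2

end Modules

section Artinian

variable {R M : Type*} [CommRing R] [AddCommGroup M] [Module R M]

lemma isArtinian_of_quotient_tower (I : Ideal R) [Module (R ⧸ I) M]
    [IsScalarTower R (R ⧸ I) M] (h : IsArtinian (R ⧸ I) M) : IsArtinian R M := by
  let f : Submodule R M → Submodule (R ⧸ I) M := fun N =>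
    { carrier := N
      add_mem' := fun ha hb => N.add_mem ha hb
      zero_mem' := N.zero_mem
      smul_mem' := by
        intro c n hn
        obtain ⟨r, rfl⟩ := Ideal.Quotient.mk_surjective c
        rw [show (Ideal.Quotient.mk I r) • n = r • n by
          rw [← Ideal.Quotient.algebraMap_eq, algebraMap_smul]]
        exact N.smul_mem r hn }
  have hf : StrictMono f := by
    intro N N' hlt
    refine lt_of_le_of_ne (fun z hz => hlt.le hz) (fun heq => hlt.ne ?_)
    apply SetLike.coe_injective
    exact congrArg (fun t : Submodule (R ⧸ I) M => (t : Set M)) heq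
  exact hf.wellFoundedLT

lemma isArtinian_of_finite_of_torsionBy_maximal [Module.Finite R M]
    (I : Ideal R) [I.IsMaximal] (h : ∀ x ∈ I, ∀ m : M, x • m = 0) : IsArtinian R M := by
  have hT : Module.IsTorsionBySet R M I := fun m x => h x.1 x.2 m
  letI := hT.module
  haveI : IsScalarTower R (R ⧸ I) M := hT.isScalarTower
  letI : Field (R ⧸ I) := Ideal.Quotient.field I
  haveI : Module.Finite (R ⧸ I) M := Module.Finite.of_restrictScalars_finite R (R ⧸ I) M
  haveI : IsArtinian (R ⧸ I) M := isArtinian_of_fg_of_artinian' (R := R ⧸ I)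
  exact isArtinian_of_quotient_tower I ‹_›

end Artinian

section Dim1

variable {R : Type*} [CommRing R] [IsDomain R] [IsLocalRing R]

open IsLocalRing

lemma prime_eq_maximal_of_dim_one (hdim : ringKrullDim R = 1) {p : Ideal R}
    (hp : p.IsPrime) (hp0 : p ≠ ⊥) : p = maximalIdeal R := by
  by_contra hne
  have hlt : p < maximalIdeal R :=
    lt_of_le_of_ne (le_maximalIdeal hp.ne_top) hne
  have h0 : (⊥ : Ideal R) < p := bot_lt_iff_ne_bot.2 hp0
  let P0 : PrimeSpectrum R := ⟨⊥, Ideal.bot_prime⟩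
  let P1 : PrimeSpectrum R := ⟨p, hp⟩
  let P2 : PrimeSpectrum R := ⟨maximalIdeal R, (maximalIdeal.isMaximal R).isPrime⟩
  have hstep : ∀ i : Fin 2, (![P0, P1, P2] : Fin 3 → PrimeSpectrum R) i.castSucc
      < (![P0, P1, P2] : Fin 3 → PrimeSpectrum R) i.succ := by
    intro i
    fin_cases i
    · exact h0
    · exact hlt
  let c : LTSeries (PrimeSpectrum R) := ⟨2, ![P0, P1, P2], hstep⟩
  have h2 := Order.LTSeries.length_le_krullDim c
  rw [show Order.krullDim (PrimeSpectrum R) = ringKrullDim R from rfl, hdim] at h2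
  norm_num [show c.length = 2 from rfl] at h2

variable [IsNoetherianRing R]

lemma maximal_pow_le_span (hdim : ringKrullDim R = 1) {r : R} (hr : r ≠ 0) :
    ∃ n : ℕ, (maximalIdeal R) ^ n ≤ Ideal.span {r} := by
  by_cases hru : IsUnit r
  · exact ⟨0, by simp [Ideal.span_singleton_eq_top.2 hru]⟩
  have hrm : r ∈ maximalIdeal R := by
    rw [mem_maximalIdeal]; exact hru
  have hrad : (Ideal.span {r}).radical = maximalIdeal R := by
    rw [Ideal.radical_eq_sInf]
    apply le_antisymm
    · exact sInf_le ⟨(Ideal.span_singleton_le_iff_mem _).2 hrm,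
        (maximalIdeal.isMaximal R).isPrime⟩
    · refine le_sInf ?_
      rintro J ⟨hrJ, hJp⟩
      have hJ0 : J ≠ ⊥ := by
        intro hJ
        apply hr
        have : r ∈ J := hrJ (Ideal.subset_span rfl)
        rwa [hJ, Ideal.mem_bot] at this
      rw [prime_eq_maximal_of_dim_one hdim hJp hJ0]
  obtain ⟨n, hn⟩ := Ideal.exists_radical_pow_le_of_fg (Ideal.span {r})
    (IsNoetherian.noetherian _)
  rw [hrad] at hn
  exact ⟨n, hn⟩

lemma isArtinian_of_fg_torsion_dim_one (hdim : ringKrullDim R = 1)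
    (M : Type*) [AddCommGroup M] [Module R M] [Module.Finite R M]
    {r : R} (hr : r ≠ 0) (htor : ∀ m : M, r • m = 0) : IsArtinian R M := by
  obtain ⟨n, hn⟩ := maximal_pow_le_span hdim hr
  have hkill : ∀ x ∈ (maximalIdeal R) ^ n, ∀ m : M, x • m = 0 := by
    intro x hx m
    obtain ⟨c, hc⟩ := Ideal.mem_span_singleton'.1 (hn hx)
    rw [← hc, mul_smul, htor, smul_zero]
  clear htor hn hr
  induction n generalizing M with
  | zero =>
    haveI : Subsingleton M := by
      refine ⟨fun m m' => ?_⟩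
      have h1 : (1 : R) • m = 0 := hkill 1 (by simp) m
      have h2 : (1 : R) • m' = 0 := hkill 1 (by simp) m'
      rw [one_smul] at h1 h2
      rw [h1, h2]
    infer_instance
  | succ n ih =>
    haveI : IsNoetherian R M := isNoetherian_of_isNoetherianRing_of_finite R M
    set N : Submodule R M := (maximalIdeal R) ^ n • ⊤ with hN
    have hbot : (maximalIdeal R) ^ (n + 1) • (⊤ : Submodule R M) = ⊥ := by
      rw [eq_bot_iff]
      refine Submodule.smul_le.2 fun y hy m _ => ?_
      rw [hkill y hy m]
      exact Submodule.zero_mem ⊥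
    haveI : Module.Finite R N := Module.Finite.iff_fg.2 (IsNoetherian.noetherian N)
    haveI hartN : IsArtinian R N := by
      apply isArtinian_of_finite_of_torsionBy_maximal (maximalIdeal R)
      intro x hx v
      apply Subtype.ext
      show x • (v : M) = 0
      have hmem : x • (v : M) ∈ (maximalIdeal R) ^ (n + 1) • (⊤ : Submodule R M) := by
        rw [pow_succ', show (maximalIdeal R * maximalIdeal R ^ n) • (⊤ : Submodule R M)
          = maximalIdeal R • ((maximalIdeal R ^ n) • (⊤ : Submodule R M)) from
          Submodule.smul_assoc _ _ _]
        exact Submodule.smul_mem_smul hx v.2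
      rw [hbot] at hmem
      exact hmem
    haveI hartQ : IsArtinian R (M ⧸ N) := by
      refine ih (M ⧸ N) ?_
      intro x hx m
      obtain ⟨v, rfl⟩ := Submodule.Quotient.mk_surjective N m
      rw [← Submodule.Quotient.mk_smul, Submodule.Quotient.mk_eq_zero]
      exact Submodule.smul_mem_smul hx Submodule.mem_top
    exact (isArtinian_iff_submodule_quotient N).2 ⟨hartN, hartQ⟩

end Dim1

section Exists

variable {R : Type*} [CommRing R] [IsDomain R] [IsLocalRing R] [IsNoetherianRing R]

lemma exists_finChain (hdim : ringKrullDim R = 1) {M : Type*} [AddCommGroup M] [Module R M]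
    {x y : Submodule R M} (hxy : x ≤ y) (hy : y.FG) {r : R} (hr : r ≠ 0)
    (hry : ∀ m ∈ y, r • m ∈ x) : ∃ d, FinChain x y d := by
  haveI : Module.Finite R y := Module.Finite.iff_fg.2 hy
  haveI : IsNoetherian R y := isNoetherian_of_isNoetherianRing_of_finite R y
  set x' : Submodule R y := x.comap y.subtype with hx'
  haveI : IsArtinian R (y ⧸ x') := by
    apply isArtinian_of_fg_torsion_dim_one hdim _ hr
    intro q
    obtain ⟨v, rfl⟩ := Submodule.Quotient.mk_surjective x' q
    rw [← Submodule.Quotient.mk_smul, Submodule.Quotient.mk_eq_zero]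
    show ((r • v : y) : M) ∈ x
    rw [Submodule.coe_smul]
    exact hry (v : M) v.2
  obtain ⟨s, hs1, hs2⟩ := exists_compositionSeries_of_isNoetherian_isArtinian R (y ⧸ x')
  have hlen : HasLength R (y ⧸ x') s.length := ⟨s.toFun, hs1, hs2, s.step⟩
  have h1 : FinChain x' ⊤ s.length := (hasLength_quotient_iff x').1 hlen
  have h2 := h1.map_subtype'
  rw [Submodule.map_comap_subtype, inf_eq_right.2 hxy] at h2
  rw [show Submodule.map y.subtype (⊤ : Submodule R y) = y by
    rw [Submodule.map_top, Submodule.range_subtype]] at h2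
  exact ⟨s.length, h2⟩

end Exists

/-- Multiplication by a nonzero element of a field `K` as an `R`-linear automorphism. -/
def mulKEquiv {R K : Type*} [CommRing R] [Field K] [Algebra R K] (z : K) (hz : z ≠ 0) :
    K ≃ₗ[R] K where
  toFun x := z * x
  invFun x := z⁻¹ * x
  left_inv x := by field_simp
  right_inv x := by field_simp
  map_add' := mul_add z
  map_smul' r x := by simp [mul_smul_comm]


/-- Let `R̃` be the integral closure of `R` in `K`, assumed to be a
finitely generated `R`-module.  If `a, b ∈ R` are nonzero and `g = b/a` is a unit of
`R̃`, then `length_R(R/bR) = length_R(R/aR)`. -/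
theorem statement17 (R : Type) [CommRing R] [IsDomain R] [IsNoetherianRing R]
    [IsLocalRing R] (hdim : ringKrullDim R = 1)
    (hfin : Module.Finite R (integralClosure R (FractionRing R)))
    (a b : R) (ha : a ≠ 0) (hb : b ≠ 0)
    (u : integralClosure R (FractionRing R)) (hu : IsUnit u)
    (hg : algebraMap R (FractionRing R) a * (u : FractionRing R)
        = algebraMap R (FractionRing R) b) :
    ∃ l : ℕ, HasLength R (R ⧸ Ideal.span {b}) l ∧
      HasLength R (R ⧸ Ideal.span {a}) l := by
  set K := FractionRing R with hK
  let ι : R →ₗ[R] K := Algebra.linearMap R K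
  have hinj : Function.Injective ι := IsFractionRing.injective R K
  set A : Submodule R K := Subalgebra.toSubmodule (integralClosure R K) with hA
  have hR'A : LinearMap.range ι ≤ A := by
    rintro z ⟨w, rfl⟩
    exact Subalgebra.algebraMap_mem (integralClosure R K) w
  have hαa : algebraMap R K a ≠ 0 := by simpa using ha
  have hαb : algebraMap R K b ≠ 0 := by simpa using hb
  let ea : K ≃ₗ[R] K := mulKEquiv (algebraMap R K a) hαa
  let eb : K ≃ₗ[R] K := mulKEquiv (algebraMap R K b) hαb
  -- the image of `span {r}` under multiplication
  have hmapR : ∀ (r : R) (hr : algebraMap R K r ≠ 0),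
      Submodule.map ((mulKEquiv (R := R) (algebraMap R K r) hr : K ≃ₗ[R] K) : K →ₗ[R] K) (LinearMap.range ι)
        = Submodule.map ι (Ideal.span {r}) := by
    intro r hr
    ext z
    simp only [Submodule.mem_map, LinearMap.mem_range]
    constructor
    · rintro ⟨m, ⟨w, rfl⟩, rfl⟩
      refine ⟨r * w, Ideal.mul_mem_right w _ (Ideal.subset_span rfl), ?_⟩
      show algebraMap R K (r * w) = _
      rw [map_mul]
      rfl
    · rintro ⟨w, hw, rfl⟩
      obtain ⟨c, rfl⟩ := Ideal.mem_span_singleton'.1 hw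
      refine ⟨algebraMap R K c, ⟨c, rfl⟩, ?_⟩
      show algebraMap R K r * algebraMap R K c = ι (c * r)
      rw [show ι (c * r) = algebraMap R K (c * r) from rfl, map_mul, mul_comm]
  -- A is finitely generated
  have hAfg : A.FG := by
    rw [← Module.Finite.iff_fg (N := A)]
    exact hfin
  -- common denominator
  obtain ⟨s, hsA⟩ := id hAfg
  obtain ⟨den, hden⟩ := IsLocalization.exist_integer_multiples (nonZeroDivisors R) s id
  have hdenne : (den : R) ≠ 0 := nonZeroDivisors.coe_ne_zero den
  have hrA : ∀ m ∈ A, (den : R) • m ∈ LinearMap.range ι := by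
    have hle : A ≤ (LinearMap.range ι).comap (LinearMap.lsmul R K (den : R)) := by
      rw [← hsA]
      rw [Submodule.span_le]
      intro k hk
      obtain ⟨w, hw⟩ := hden k hk
      exact ⟨w, hw⟩
    intro m hm
    exact hle hm
  -- units
  set uK : K := (u : K) with huK
  set vK : K := (((hu.unit⁻¹ : (integralClosure R K)ˣ) : integralClosure R K) : K) with hvK
  have huv : uK * vK = 1 := by
    have h0 : (hu.unit : integralClosure R K) * ((hu.unit⁻¹ : (integralClosure R K)ˣ)
        : integralClosure R K) = 1 := by exact_mod_cast hu.unit.mul_inv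
    rw [hu.unit_spec] at h0
    rw [huK, hvK]
    exact_mod_cast h0
  have hmulA : ∀ {z w : K}, z ∈ A → w ∈ A → z * w ∈ A := fun hz hw =>
    (Subalgebra.mem_toSubmodule _).2
      (mul_mem ((Subalgebra.mem_toSubmodule _).1 hz) ((Subalgebra.mem_toSubmodule _).1 hw))
  have huA : uK ∈ A := u.2
  have hvA : vK ∈ A := ((hu.unit⁻¹ : (integralClosure R K)ˣ) : integralClosure R K).2
  -- Aa = image of A under mult by αa, similarly Ab, and they are equal
  set Aa : Submodule R K := Submodule.map (ea : K →ₗ[R] K) A with hAa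
  have hAbAa : Submodule.map (eb : K →ₗ[R] K) A = Aa := by
    ext z
    simp only [hAa, Submodule.mem_map]
    constructor
    · rintro ⟨m, hm, rfl⟩
      refine ⟨uK * m, ?_, ?_⟩
      · exact hmulA huA hm
      · show algebraMap R (FractionRing R) a * (uK * m)
            = algebraMap R (FractionRing R) b * m
        rw [← hg, mul_assoc]
    · rintro ⟨m, hm, rfl⟩
      refine ⟨vK * m, hmulA hvA hm, ?_⟩
      show algebraMap R (FractionRing R) b * (vK * m)
          = algebraMap R (FractionRing R) a * m
      rw [← hg, mul_assoc, ← mul_assoc uK vK m, huv, one_mul]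
  have hAaA : Aa ≤ A := by
    rintro z ⟨m, hm, rfl⟩
    show algebraMap R K a * m ∈ A
    exact hmulA (hR'A ⟨a, rfl⟩) hm
  -- chain existence
  obtain ⟨la, hla⟩ := exists_finChain (R := R) hdim (x := Ideal.span {a}) (y := ⊤)
    le_top (IsNoetherian.noetherian ⊤) ha
    (fun m _ => Ideal.mem_span_singleton'.2 ⟨m, by rw [smul_eq_mul, mul_comm]⟩)
  obtain ⟨lb, hlb⟩ := exists_finChain (R := R) hdim (x := Ideal.span {b}) (y := ⊤)
    le_top (IsNoetherian.noetherian ⊤) hb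
    (fun m _ => Ideal.mem_span_singleton'.2 ⟨m, by rw [smul_eq_mul, mul_comm]⟩)
  obtain ⟨c, hc⟩ := exists_finChain (R := R) hdim hR'A hAfg hdenne hrA
  obtain ⟨xa, hxa⟩ := exists_finChain (R := R) hdim hAaA hAfg ha
    (fun m hm => ⟨m, hm, (Algebra.smul_def a m).symm⟩)
  -- transport hc by multiplication
  have hca : FinChain (Submodule.map ι (Ideal.span {a})) Aa c := by
    have := hc.map_linearEquiv ea
    rwa [hmapR a hαa] at this
  have hcb : FinChain (Submodule.map ι (Ideal.span {b})) Aa c := by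
    have := hc.map_linearEquiv eb
    rwa [hmapR b hαb, hAbAa] at this
  -- transport hla, hlb into K
  have hla' : FinChain (Submodule.map ι (Ideal.span {a})) (LinearMap.range ι) la := by
    have := hla.map_injective hinj
    rwa [Submodule.map_top] at this
  have hlb' : FinChain (Submodule.map ι (Ideal.span {b})) (LinearMap.range ι) lb := by
    have := hlb.map_injective hinj
    rwa [Submodule.map_top] at this
  -- two chains from map ι (span a) to A
  have h1 : FinChain (Submodule.map ι (Ideal.span {a})) A (la + c) := hla'.trans hc
  have h2 : FinChain (Submodule.map ι (Ideal.span {a})) A (c + xa) := hca.trans hxa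
  have h3 : FinChain (Submodule.map ι (Ideal.span {b})) A (lb + c) := hlb'.trans hc
  have h4 : FinChain (Submodule.map ι (Ideal.span {b})) A (c + xa) := hcb.trans hxa
  have e1 : la + c = c + xa := h1.unique h2
  have e2 : lb + c = c + xa := h3.unique h4
  have e3 : lb = la := by omega
  refine ⟨la, ?_, ?_⟩
  · rw [hasLength_quotient_iff]
    rw [← e3]
    exact hlb
  · rw [hasLength_quotient_iff]
    exact hla
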